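/- Write N = 2n + r with r ∈ {0,1}, and let π be a link pattern (involution of {1,…,N} with exactly r fixed points). Let t_1,…,t_N ∈ ℂ be all nonzero and satisfy t_i t_{π(i)} ≠ t_k t_{π(k)} whenever k ∉ {i, π(i)}, and let A ∈ M_N(ℂ) be the matrix with A_{ij} = t_j if j = π(i) and j ≠ i, and A_{ij} = 0 otherwise (i.e., A = π̲ t for t the diagonal matrix diag(t_1,…,t_N)). Then the kernel of the ℂ-linear map P ↦ P • A + A • P on the space of zero-diagonal matrices {P ∈ M_N(ℂ) : P_{ii} = 0 for all i} has dimension ⌊N²/2⌋. (This is the Zariski tangent space computation showing the component E_π of the Brauer loop scheme is generically reduced.) -/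

import Mathlib

open Matrix BigOperators Finset

/-- `cyc3 i j k` : the sequence `(i,j,k)` of indices is cyclically ordered `⟨i ≤ j ≤ k⟩`,
i.e. some cyclic rotation of it is weakly increasing, with all entries required to be
equal when the first and last entries coincide. -/
def cyc3 {N : ℕ} (i j k : Fin N) : Prop :=
  if i = k then j = i
  else (i ≤ j ∧ j ≤ k) ∨ (j ≤ k ∧ k ≤ i) ∨ (k ≤ i ∧ i ≤ j)

instance cyc3.dec {N : ℕ} (i j k : Fin N) : Decidable (cyc3 i j k) := by
  unfold cyc3; infer_instance

/-- The degenerate product `•` on `N × N` complex matrices: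
`(P • Q)_{ik} = ∑_{j : ⟨i ≤ j ≤ k⟩} P_{ij} Q_{jk}`. -/
noncomputable def cprod {N : ℕ} (P Q : Matrix (Fin N) (Fin N) ℂ) :
    Matrix (Fin N) (Fin N) ℂ :=
  Matrix.of fun i k => ∑ j ∈ Finset.univ.filter (fun j => cyc3 i j k), P i j * Q j k

lemma cprod_add_left {N : ℕ} (P Q A : Matrix (Fin N) (Fin N) ℂ) :
    cprod (P + Q) A = cprod P A + cprod Q A := by
  ext i k
  simp only [cprod, Matrix.of_apply, Matrix.add_apply, ← Finset.sum_add_distrib]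
  exact Finset.sum_congr rfl fun j _ => by ring

lemma cprod_add_right {N : ℕ} (A P Q : Matrix (Fin N) (Fin N) ℂ) :
    cprod A (P + Q) = cprod A P + cprod A Q := by
  ext i k
  simp only [cprod, Matrix.of_apply, Matrix.add_apply, ← Finset.sum_add_distrib]
  exact Finset.sum_congr rfl fun j _ => by ring

lemma cprod_smul_left {N : ℕ} (c : ℂ) (P A : Matrix (Fin N) (Fin N) ℂ) :
    cprod (c • P) A = c • cprod P A := by
  ext i k
  simp only [cprod, Matrix.of_apply, Matrix.smul_apply, smul_eq_mul, Finset.mul_sum]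
  exact Finset.sum_congr rfl fun j _ => by ring

lemma cprod_smul_right {N : ℕ} (c : ℂ) (A P : Matrix (Fin N) (Fin N) ℂ) :
    cprod A (c • P) = c • cprod A P := by
  ext i k
  simp only [cprod, Matrix.of_apply, Matrix.smul_apply, smul_eq_mul, Finset.mul_sum]
  exact Finset.sum_congr rfl fun j _ => by ring

/-- The linear map `P ↦ P • A + A • P` on `N × N` complex matrices. -/
noncomputable def brauerTangentMap (N : ℕ) (A : Matrix (Fin N) (Fin N) ℂ) :
    Matrix (Fin N) (Fin N) ℂ →ₗ[ℂ] Matrix (Fin N) (Fin N) ℂ where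
  toFun P := cprod P A + cprod A P
  map_add' P Q := by (try dsimp only); rw [cprod_add_left, cprod_add_right]; abel
  map_smul' c P := by
    (try dsimp only); rw [cprod_smul_left, cprod_smul_right, RingHom.id_apply, smul_add]

/-- The subspace of zero-diagonal matrices. -/
noncomputable def diagZeroSubmodule (N : ℕ) : Submodule ℂ (Matrix (Fin N) (Fin N) ℂ) where
  carrier := {P | ∀ i, P i i = 0}
  add_mem' := by intro a b ha hb i; simp [Matrix.add_apply, ha i, hb i]
  zero_mem' := by intro i; simp
  smul_mem' := by intro c a ha i; simp [Matrix.smul_apply, ha i]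

/-! ### Auxiliary machinery -/

def nb {N : ℕ} (a b c : Fin N) : Prop := (a ≤ b ∧ b ≤ c) ∨ (b ≤ c ∧ c ≤ a) ∨ (c ≤ a ∧ a ≤ b)

instance nb.dec {N : ℕ} (a b c : Fin N) : Decidable (nb a b c) := by unfold nb; infer_instance

lemma nb_xor {N : ℕ} {a b c : Fin N} (h1 : a ≠ b) (h2 : b ≠ c) (h3 : a ≠ c) :
    nb a b c ↔ ¬ nb a c b := by
  simp only [nb, Fin.le_def, Ne, ← Fin.val_eq_val] at *; omega

lemma nb_rot {N : ℕ} {a b c : Fin N} : nb a b c ↔ nb b c a := by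
  simp only [nb, Fin.le_def]; omega

lemma nb_right {N : ℕ} (a b : Fin N) : nb a b b := by
  simp only [nb, Fin.le_def]; omega

lemma nbM1 {N : ℕ} {x x' y y' : Fin N} (d1 : x ≠ x') (d2 : x ≠ y) (d3 : x ≠ y')
    (d4 : x' ≠ y) (d5 : x' ≠ y') (d6 : y ≠ y')
    (hC1 : nb x x' y) (hC2 : nb x' x y') :
    ¬ nb x y y' ∧ ¬ nb x x' y' ∧ ¬ nb x' x y ∧ ¬ nb x' y' y := by
  simp only [nb, Fin.le_def, Ne, ← Fin.val_eq_val] at *; omega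

lemma nbM2 {N : ℕ} {x x' y y' : Fin N} (d1 : x ≠ x') (d2 : x ≠ y) (d3 : x ≠ y')
    (d4 : x' ≠ y) (d5 : x' ≠ y') (d6 : y ≠ y')
    (hC1 : ¬ nb x x' y) (hC2 : ¬ nb x' x y') :
    nb x y y' ∧ nb x x' y' ∧ nb x' x y ∧ nb x' y' y := by
  simp only [nb, Fin.le_def, Ne, ← Fin.val_eq_val] at *; omega

lemma nbM3 {N : ℕ} {x x' y y' : Fin N} (d1 : x ≠ x') (d2 : x ≠ y) (d3 : x ≠ y')
    (d4 : x' ≠ y) (d5 : x' ≠ y') (d6 : y ≠ y')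
    (hC1 : nb x x' y) (hC2 : ¬ nb x' x y') :
    (nb x y y' ∧ nb x x' y' ∧ ¬ nb x' x y ∧ ¬ nb x' y' y) ∨
    (¬ nb x y y' ∧ nb x x' y' ∧ ¬ nb x' x y ∧ nb x' y' y) := by
  simp only [nb, Fin.le_def, Ne, ← Fin.val_eq_val] at *; omega

lemma nbM4 {N : ℕ} {x x' y y' : Fin N} (d1 : x ≠ x') (d2 : x ≠ y) (d3 : x ≠ y')
    (d4 : x' ≠ y) (d5 : x' ≠ y') (d6 : y ≠ y')
    (hC1 : ¬ nb x x' y) (hC2 : nb x' x y') :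
    (¬ nb x y y' ∧ ¬ nb x x' y' ∧ nb x' x y ∧ nb x' y' y) ∨
    (nb x y y' ∧ ¬ nb x x' y' ∧ nb x' x y ∧ ¬ nb x' y' y) := by
  simp only [nb, Fin.le_def, Ne, ← Fin.val_eq_val] at *; omega

lemma cyc3_of_ne {N : ℕ} {i k : Fin N} (h : i ≠ k) (j : Fin N) : cyc3 i j k ↔ nb i j k := by
  unfold cyc3 nb; rw [if_neg h]

lemma cyc3_diag {N : ℕ} (i j : Fin N) : cyc3 i j i ↔ j = i := by
  unfold cyc3; rw [if_pos rfl]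

section KernelEq
variable {N : ℕ} (π : Equiv.Perm (Fin N)) (t : Fin N → ℂ)
    (A : Matrix (Fin N) (Fin N) ℂ)

lemma cprod_PA (hinv : ∀ i, π (π i) = i)
    (hA : ∀ i j, A i j = if j = π i ∧ j ≠ i then t j else 0)
    (P : Matrix (Fin N) (Fin N) ℂ) (i k : Fin N) :
    cprod P A i k = if cyc3 i (π k) k ∧ π k ≠ k then P i (π k) * t k else 0 := by
  rw [cprod, Matrix.of_apply, Finset.sum_filter]
  have key : ∀ j : Fin N, (if cyc3 i j k then P i j * A j k else 0)
      = if j = π k then (if cyc3 i (π k) k ∧ π k ≠ k then P i (π k) * t k else 0) else 0 := by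
    intro j
    rw [hA]
    by_cases hj : j = π k
    · subst hj
      have h3 : (k = π (π k) ∧ k ≠ π k) ↔ (π k ≠ k) :=
        ⟨fun h e => h.2 e.symm, fun h => ⟨(hinv k).symm, fun e => h e.symm⟩⟩
      rw [if_pos rfl]
      by_cases hc : cyc3 i (π k) k
      · by_cases hk2 : π k ≠ k
        · rw [if_pos hc, if_pos (h3.mpr hk2), if_pos ⟨hc, hk2⟩]
        · rw [if_pos hc, if_neg (fun h => hk2 (h3.mp h)), mul_zero,
            if_neg (fun h => hk2 h.2)]
      · rw [if_neg hc, if_neg (fun h => hc h.1)]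
    · rw [if_neg hj]
      have hne : ¬ (k = π j ∧ k ≠ j) := by
        rintro ⟨h1, -⟩; exact hj (by rw [h1, hinv])
      rw [if_neg hne]
      split_ifs <;> simp
  rw [Finset.sum_congr rfl (fun j _ => key j), Finset.sum_ite_eq' Finset.univ (π k)]
  simp

lemma cprod_AP (hA : ∀ i j, A i j = if j = π i ∧ j ≠ i then t j else 0)
    (P : Matrix (Fin N) (Fin N) ℂ) (i k : Fin N) :
    cprod A P i k = if cyc3 i (π i) k ∧ π i ≠ i then t (π i) * P (π i) k else 0 := by
  rw [cprod, Matrix.of_apply, Finset.sum_filter]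
  have key : ∀ j : Fin N, (if cyc3 i j k then A i j * P j k else 0)
      = if j = π i then (if cyc3 i (π i) k ∧ π i ≠ i then t (π i) * P (π i) k else 0) else 0 := by
    intro j
    rw [hA]
    by_cases hj : j = π i
    · subst hj
      rw [if_pos rfl]
      by_cases hc : cyc3 i (π i) k
      · by_cases hk2 : π i ≠ i
        · rw [if_pos hc, if_pos ⟨rfl, hk2⟩, if_pos ⟨hc, hk2⟩]
        · rw [if_pos hc, if_neg (fun h => hk2 h.2), zero_mul,
            if_neg (fun h => hk2 h.2)]
      · rw [if_neg hc, if_neg (fun h => hc h.1)]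
    · rw [if_neg hj]
      rw [if_neg (fun h : j = π i ∧ _ => hj h.1)]
      split_ifs <;> simp
  rw [Finset.sum_congr rfl (fun j _ => key j), Finset.sum_ite_eq' Finset.univ (π i)]
  simp

lemma mem_ker_iff (hinv : ∀ i, π (π i) = i)
    (hA : ∀ i j, A i j = if j = π i ∧ j ≠ i then t j else 0)
    (P : Matrix (Fin N) (Fin N) ℂ) :
    brauerTangentMap N A P = 0 ↔ ∀ i k : Fin N,
      (if cyc3 i (π k) k ∧ π k ≠ k then P i (π k) * t k else 0)
      + (if cyc3 i (π i) k ∧ π i ≠ i then t (π i) * P (π i) k else 0) = 0 := by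
  constructor
  · intro h i k
    have := congrFun (congrFun (congrArg (fun M => M) h) i) k
    have h2 : (cprod P A + cprod A P) i k = 0 := by
      simpa [brauerTangentMap] using congrFun (congrFun h i) k
    rw [Matrix.add_apply, cprod_PA π t A hinv hA, cprod_AP π t A hA] at h2
    exact h2
  · intro h
    ext i k
    show (cprod P A + cprod A P) i k = 0
    rw [Matrix.add_apply, cprod_PA π t A hinv hA, cprod_AP π t A hA]
    exact h i k
end KernelEq
/-- The set of "free" positions. -/
def Bset (N : ℕ) (π : Equiv.Perm (Fin N)) : Finset (Fin N × Fin N) :=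
  Finset.univ.filter (fun q => q.1 ≠ q.2 ∧
    (if π q.1 = q.1 then nb q.1 (π q.2) q.2 else nb q.1 (π q.1) q.2))

lemma mem_Bset {N : ℕ} {π : Equiv.Perm (Fin N)} {q : Fin N × Fin N} :
    q ∈ Bset N π ↔ q.1 ≠ q.2 ∧
      (if π q.1 = q.1 then nb q.1 (π q.2) q.2 else nb q.1 (π q.1) q.2) := by
  simp [Bset]

section Count
variable {N : ℕ} {n r : ℕ} (π : Equiv.Perm (Fin N))

lemma uniqfix (hr : r = 0 ∨ r = 1)
    (hfix : (Finset.univ.filter (fun i => π i = i)).card = r)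
    {a b : Fin N} (ha : π a = a) (hb : π b = b) : a = b := by
  by_contra hne
  have hsub : ({a, b} : Finset (Fin N)) ⊆ Finset.univ.filter (fun i => π i = i) := by
    intro x hx
    simp only [Finset.mem_insert, Finset.mem_singleton] at hx
    rcases hx with rfl | rfl <;> simp [ha, hb]
  have := Finset.card_le_card hsub
  rw [hfix, Finset.card_insert_of_notMem (by simpa using hne), Finset.card_singleton] at this
  omega

lemma card_Bset (hr : r = 0 ∨ r = 1) (hN : N = 2 * n + r) (hpos : 0 < N)
    (hinv : ∀ i, π (π i) = i)
    (hfix : (Finset.univ.filter (fun i => π i = i)).card = r) :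
    (Bset N π).card = N ^ 2 / 2 := by
  classical
  set od : Finset (Fin N × Fin N) := Finset.univ.filter (fun q => q.1 ≠ q.2) with hod
  set T : Finset (Fin N × Fin N) := od.filter (fun q => q.2 = π q.1) with hT
  set S : Finset (Fin N × Fin N) := od.filter (fun q => ¬ q.2 = π q.1) with hS
  set C : Fin N × Fin N → Prop := fun q =>
    (if π q.1 = q.1 then nb q.1 (π q.2) q.2 else nb q.1 (π q.1) q.2) with hC
  -- basic facts for elements of S
  have hSfact : ∀ q ∈ S, q.1 ≠ q.2 ∧ q.2 ≠ π q.1 ∧ q.1 ≠ π q.2 ∧ π q.1 ≠ π q.2 := by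
    rintro ⟨a, b⟩ hq
    simp only [hS, hod, Finset.mem_filter, Finset.mem_univ, true_and] at hq
    obtain ⟨h1, h2⟩ := hq
    dsimp only at h1 h2 ⊢
    refine ⟨h1, h2, ?_, fun h => h1 (π.injective h)⟩
    intro h
    exact h2 ((congrArg π h).trans (hinv b)).symm
  -- the involution
  set τ : Fin N × Fin N → Fin N × Fin N := fun q =>
    if π q.1 = q.1 then (q.1, π q.2) else (π q.1, q.2) with hτ
  have hτS : ∀ q ∈ S, τ q ∈ S := by
    rintro ⟨a, b⟩ hq
    obtain ⟨h1, h2, h3, h4⟩ := hSfact ⟨a, b⟩ hq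
    dsimp only at h1 h2 h3 h4
    simp only [hτ, hS, hod, Finset.mem_filter, Finset.mem_univ, true_and]
    by_cases hfa : π a = a
    · rw [if_pos hfa]
      exact ⟨h3, fun h => h1 (π.injective h).symm⟩
    · rw [if_neg hfa]
      refine ⟨fun h => h2 h.symm, fun h => h1 ?_⟩
      rw [hinv] at h
      exact h.symm
  have hττ : ∀ q ∈ S, τ (τ q) = q := by
    rintro ⟨a, b⟩ _
    simp only [hτ]
    by_cases hfa : π a = a
    · simp only [if_pos hfa, hinv]
    · rw [if_neg hfa]
      dsimp only
      rw [hinv, if_neg (fun h => hfa h.symm)]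
  have hτC : ∀ q ∈ S, (C q ↔ ¬ C (τ q)) := by
    rintro ⟨a, b⟩ hq
    obtain ⟨h1, h2, h3, h4⟩ := hSfact ⟨a, b⟩ hq
    dsimp only at h1 h2 h3 h4
    simp only [hτ, hC]
    by_cases hfa : π a = a
    · simp only [if_pos hfa, hinv]
      have hb : π b ≠ b := fun hb => h1 (uniqfix π hr hfix hfa hb)
      exact nb_xor h3 hb h1
    · have hfa2 : ¬ π (π a) = π a := fun h => hfa (by rw [hinv] at h; exact h.symm)
      simp only [if_neg hfa, if_neg hfa2, hinv]
      rw [if_neg (fun h : a = π a => hfa h.symm)]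
      rw [nb_xor (fun h => hfa h.symm) (fun h => h2 h.symm) h1]
      exact ⟨fun h hc => h (nb_rot.mp hc), fun h hc => h (nb_rot.mpr hc)⟩
  -- cardinalities
  have hcards : (S.filter C).card = (S.filter (fun q => ¬ C q)).card := by
    apply Finset.card_bij' (fun q _ => τ q) (fun q _ => τ q)
    · rintro q hq
      rw [Finset.mem_filter] at hq ⊢
      exact ⟨hτS q hq.1, (hτC q hq.1).mp hq.2⟩
    · rintro q hq
      rw [Finset.mem_filter] at hq ⊢
      refine ⟨hτS q hq.1, ?_⟩
      have h5 := hτC (τ q) (hτS q hq.1)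
      rw [hττ q hq.1] at h5
      exact h5.mpr hq.2
    · intro q hq; exact hττ q (Finset.mem_filter.mp hq).1
    · intro q hq; exact hττ q (Finset.mem_filter.mp hq).1
  -- identify Bset
  have hB : Bset N π = od.filter C := by
    rw [hod, Finset.filter_filter]
    rfl
  -- partition od.filter C
  have hBT : (od.filter C).filter (fun q => q.2 = π q.1) = T := by
    rw [hT]
    ext ⟨a, b⟩
    simp only [Finset.mem_filter, hod, Finset.mem_univ, true_and, and_assoc]
    constructor
    · rintro ⟨h1, -, h3⟩; exact ⟨h1, h3⟩
    · rintro ⟨h1, h3⟩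
      refine ⟨h1, ?_, h3⟩
      simp only [hC]
      have hfa : ¬ π a = a := fun h => h1 (h3.trans h).symm
      rw [if_neg hfa, ← h3]
      exact nb_right a b
  have hBS : (od.filter C).filter (fun q => ¬ q.2 = π q.1) = S.filter C := by
    rw [hS, Finset.filter_filter, Finset.filter_filter]
    ext q
    simp only [hod, Finset.mem_filter, Finset.mem_univ, true_and]
    tauto
  have hBcard : (Bset N π).card = T.card + (S.filter C).card := by
    rw [hB, ← hBT, ← hBS]
    exact (Finset.card_filter_add_card_filter_not
      (s := od.filter C) (p := fun q : Fin N × Fin N => q.2 = π q.1)).symm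
  -- cardinalities of the pieces
  have hodcard : od.card + N = N ^ 2 := by
    have h1 : od = Finset.univ.offDiag := by
      rw [hod]
      ext q
      simp [Finset.mem_offDiag]
    rw [h1, Finset.offDiag_card, Finset.card_univ, Fintype.card_fin, pow_two]
    have : N ≤ N * N := Nat.le_mul_of_pos_left N hpos
    omega
  have hTcard : T.card + r = N := by
    have h1 : T.card = (Finset.univ.filter (fun a => ¬ π a = a)).card := by
      apply Finset.card_bij' (fun q _ => q.1) (fun a _ => (a, π a))
      · rintro ⟨a, b⟩ hq
        simp only [hT, hod, Finset.mem_filter, Finset.mem_univ, true_and] at hq ⊢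
        exact fun h => hq.1 ((hq.2 : b = π a).trans h).symm
      · intro a ha
        simp only [Finset.mem_filter, Finset.mem_univ, true_and] at ha
        simp only [hT, hod, Finset.mem_filter, Finset.mem_univ, true_and]
        exact ⟨fun h => ha h.symm, trivial⟩
      · rintro ⟨a, b⟩ hq
        simp only [hT, hod, Finset.mem_filter, Finset.mem_univ, true_and] at hq
        have h3 : b = π a := hq.2
        rw [Prod.mk.injEq]
        exact ⟨rfl, h3.symm⟩
      · intro a _; rfl
    have h2 := Finset.card_filter_add_card_filter_not
      (s := Finset.univ) (p := fun a : Fin N => π a = a)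
    rw [hfix, Finset.card_univ, Fintype.card_fin] at h2
    omega
  have hsplit : (S.filter C).card + (S.filter (fun q => ¬ C q)).card = S.card :=
    Finset.card_filter_add_card_filter_not C
  have hST : T.card + S.card = od.card := by
    rw [hT, hS]
    exact Finset.card_filter_add_card_filter_not
      (s := od) (p := fun q : Fin N × Fin N => q.2 = π q.1)
  obtain ⟨M, hM⟩ : ∃ M, N ^ 2 = M := ⟨_, rfl⟩
  rw [hBcard, hM]
  rw [hM] at hodcard
  omega
end Count
section Solution
variable {N : ℕ} {r : ℕ} {π : Equiv.Perm (Fin N)} {t : Fin N → ℂ} {g : Fin N × Fin N → ℂ}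

/-- The candidate kernel element built from free coordinates `g`. -/
noncomputable def solM (π : Equiv.Perm (Fin N)) (t : Fin N → ℂ)
    (g : Fin N × Fin N → ℂ) : Matrix (Fin N) (Fin N) ℂ :=
  Matrix.of fun a b =>
    if a = b then 0
    else if (a, b) ∈ Bset N π then g (a, b)
    else if π a ≠ a ∧ π b ≠ b ∧ nb (π a) a b ∧ nb (π a) (π b) b then
      -(t b / t a) * g (π a, π b)
    else 0

lemma solM_diag (a : Fin N) : solM π t g a a = 0 := by
  simp [solM]

lemma solM_of_mem {a b : Fin N} (h : (a, b) ∈ Bset N π) : solM π t g a b = g (a, b) := by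
  have hab : a ≠ b := (mem_Bset.mp h).1
  simp only [solM, Matrix.of_apply]
  rw [if_neg hab, if_pos h]

lemma solM_zero {a b : Fin N} (hab : a ≠ b) (h1 : (a, b) ∉ Bset N π)
    (h2 : ¬ (π a ≠ a ∧ π b ≠ b ∧ nb (π a) a b ∧ nb (π a) (π b) b)) :
    solM π t g a b = 0 := by
  simp only [solM, Matrix.of_apply]
  rw [if_neg hab, if_neg h1, if_neg h2]

lemma solM_rel {a b : Fin N} (hab : a ≠ b) (h1 : (a, b) ∉ Bset N π)
    (h2 : π a ≠ a ∧ π b ≠ b ∧ nb (π a) a b ∧ nb (π a) (π b) b) :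
    solM π t g a b = -(t b / t a) * g (π a, π b) := by
  simp only [solM, Matrix.of_apply]
  rw [if_neg hab, if_neg h1, if_pos h2]

lemma not_mem_Bset_fix {a b : Fin N} (hfa : π a = a) (h : ¬ nb a (π b) b) :
    (a, b) ∉ Bset N π := by
  intro hmem
  have h2 := (mem_Bset.mp hmem).2
  rw [if_pos hfa] at h2
  exact h h2

lemma not_mem_Bset_nonfix {a b : Fin N} (hfa : ¬ π a = a) (h : ¬ nb a (π a) b) :
    (a, b) ∉ Bset N π := by
  intro hmem
  have h2 := (mem_Bset.mp hmem).2
  rw [if_neg hfa] at h2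
  exact h h2

lemma mem_Bset_nonfix {a b : Fin N} (hab : a ≠ b) (hfa : ¬ π a = a) (h : nb a (π a) b) :
    (a, b) ∈ Bset N π := by
  rw [mem_Bset, if_neg hfa]
  exact ⟨hab, h⟩

/-- The constructed matrix satisfies all the kernel equations. -/
lemma solM_ker (hr : r = 0 ∨ r = 1) (hinv : ∀ i, π (π i) = i)
    (hfix : (Finset.univ.filter (fun i => π i = i)).card = r)
    (ht0 : ∀ i, t i ≠ 0)
    (hg : ∀ q, q ∉ Bset N π → g q = 0) (a k : Fin N) :
    (if cyc3 a (π k) k ∧ π k ≠ k then solM π t g a (π k) * t k else 0)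
    + (if cyc3 a (π a) k ∧ π a ≠ a then t (π a) * solM π t g (π a) k else 0) = 0 := by
  obtain ⟨b, rfl⟩ : ∃ b, k = π b := ⟨π k, (hinv k).symm⟩
  simp only [hinv]
  by_cases hik : a = π b
  · rw [if_neg, if_neg]
    · simp
    · rintro ⟨h1, h2⟩
      rw [← hik] at h1
      exact h2 ((cyc3_diag a (π a)).mp h1)
    · rintro ⟨h1, h2⟩
      rw [← hik] at h1 h2
      exact h2 ((cyc3_diag a b).mp h1)
  · simp only [cyc3_of_ne hik]
    by_cases hab : a = b
    · have hd1 : solM π t g a b = 0 := by rw [← hab]; exact solM_diag a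
      have hπab : π a = π b := by rw [hab]
      have hd2 : solM π t g (π a) (π b) = 0 := by rw [hπab]; exact solM_diag (π b)
      rw [hd1, hd2]
      split_ifs <;> simp
    · by_cases hfa : π a = a
      · -- first coordinate fixed by π
        rw [if_neg (c := nb a (π a) (π b) ∧ π a ≠ a) (fun h => h.2 hfa), add_zero]
        by_cases hcond : nb a b (π b) ∧ b ≠ π b
        · obtain ⟨hα, hbb⟩ := hcond
          have hxor : ¬ nb a (π b) b := (nb_xor hab hbb hik).mp hα
          have hzero : solM π t g a b = 0 :=
            solM_zero hab (not_mem_Bset_fix hfa hxor) (fun h => h.1 hfa)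
          rw [if_pos (c := nb a b (π b) ∧ b ≠ π b) ⟨hα, hbb⟩, hzero, zero_mul]
        · rw [if_neg (c := nb a b (π b) ∧ b ≠ π b) hcond]
      · by_cases hfb : π b = b
        · -- second coordinate fixed by π
          rw [if_neg (c := nb a b (π b) ∧ b ≠ π b) (fun h => h.2 hfb.symm), zero_add]
          by_cases hcond : nb a (π a) (π b) ∧ π a ≠ a
          · have hβ := hcond.1
            have hπab : π a ≠ b := by
              intro h
              exact hab (by rw [← hinv a, h, hfb])
            have hβ' : nb a (π a) b := by rwa [hfb] at hβ
            have hxor : ¬ nb a b (π a) := (nb_xor (fun h => hfa h.symm) hπab hab).mp hβ'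
            have hc : ¬ nb (π a) a b := fun h => hxor (nb_rot.mp h)
            have hfa2 : ¬ π (π a) = π a := by
              rw [hinv]; exact fun h => hfa h.symm
            have hnotB : (π a, b) ∉ Bset N π :=
              not_mem_Bset_nonfix hfa2 (by rw [hinv]; exact hc)
            have hzero : solM π t g (π a) (π b) = 0 := by
              rw [hfb]
              exact solM_zero hπab hnotB (fun h => h.2.1 hfb)
            rw [if_pos (c := nb a (π a) (π b) ∧ π a ≠ a) hcond, hzero, mul_zero]
          · rw [if_neg (c := nb a (π a) (π b) ∧ π a ≠ a) hcond]
        · -- generic case : a, π a, b, π b pairwise distinct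
          have d1 : a ≠ π a := fun h => hfa h.symm
          have d2 : a ≠ b := hab
          have d3 : a ≠ π b := hik
          have d4 : π a ≠ b := fun h => hik (by rw [← h, hinv])
          have d5 : π a ≠ π b := fun h => hab (π.injective h)
          have d6 : b ≠ π b := fun h => hfb h.symm
          have hfa2 : ¬ π (π a) = π a := by rw [hinv]; exact fun h => hfa h.symm
          have hfb2 : ¬ π (π b) = π b := by rw [hinv]; exact fun h => hfb h.symm
          by_cases hC1 : nb a (π a) b <;> by_cases hC2 : nb (π a) a (π b)
          · -- both free, no constraints
            obtain ⟨hα, hβ, -, -⟩ := nbM1 d1 d2 d3 d4 d5 d6 hC1 hC2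
            rw [if_neg (c := nb a b (π b) ∧ b ≠ π b) (fun h => hα h.1),
              if_neg (c := nb a (π a) (π b) ∧ π a ≠ a) (fun h => hβ h.1), add_zero]
          · -- C1 and not C2
            have hB2 : (π a, π b) ∉ Bset N π :=
              not_mem_Bset_nonfix hfa2 (by rw [hinv]; exact hC2)
            rcases nbM3 d1 d2 d3 d4 d5 d6 hC1 hC2 with ⟨hα, hβ, hγ, hδ⟩ | ⟨hα, hβ, hγ, hδ⟩
            · have hs1 : solM π t g a b = g (a, b) :=
                solM_of_mem (mem_Bset_nonfix hab hfa hC1)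
              have hcond3 : π (π a) ≠ π a ∧ π (π b) ≠ π b ∧
                  nb (π (π a)) (π a) (π b) ∧ nb (π (π a)) (π (π b)) (π b) := by
                refine ⟨hfa2, hfb2, ?_, ?_⟩
                · rw [hinv]; exact hβ
                · rw [hinv, hinv]; exact hα
              have hs2 : solM π t g (π a) (π b) = -(t (π b) / t (π a)) * g (a, b) := by
                rw [solM_rel d5 hB2 hcond3, hinv, hinv]
              rw [if_pos (c := nb a b (π b) ∧ b ≠ π b) ⟨hα, d6⟩,
                if_pos (c := nb a (π a) (π b) ∧ π a ≠ a) ⟨hβ, fun h => hfa h⟩, hs1, hs2]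
              have := ht0 (π a)
              field_simp
              ring
            · rw [if_neg (c := nb a b (π b) ∧ b ≠ π b) (fun h => hα h.1), zero_add,
                if_pos (c := nb a (π a) (π b) ∧ π a ≠ a) ⟨hβ, fun h => hfa h⟩]
              have hs2 : solM π t g (π a) (π b) = 0 := by
                refine solM_zero d5 hB2 (fun h => hα ?_)
                have h4 := h.2.2.2
                rw [hinv, hinv] at h4
                exact h4
              rw [hs2, mul_zero]
          · -- not C1 and C2
            have hB1 : (a, b) ∉ Bset N π := not_mem_Bset_nonfix hfa hC1
            rcases nbM4 d1 d2 d3 d4 d5 d6 hC1 hC2 with ⟨hα, hβ, hγ, hδ⟩ | ⟨hα, hβ, hγ, hδ⟩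
            · rw [if_neg (fun h => hα h.1), if_neg (fun h => hβ h.1), add_zero]
            · rw [if_neg (c := nb a (π a) (π b) ∧ π a ≠ a) (fun h => hβ h.1), add_zero,
                if_pos (c := nb a b (π b) ∧ b ≠ π b) ⟨hα, d6⟩]
              have hs1 : solM π t g a b = 0 :=
                solM_zero hab hB1 (fun h => hδ h.2.2.2)
              rw [hs1, zero_mul]
          · -- neither free : crossing case, both entries vanish
            have hB1 : (a, b) ∉ Bset N π := not_mem_Bset_nonfix hfa hC1
            have hB2 : (π a, π b) ∉ Bset N π :=
              not_mem_Bset_nonfix hfa2 (by rw [hinv]; exact hC2)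
            obtain ⟨hα, hβ, hγ, hδ⟩ := nbM2 d1 d2 d3 d4 d5 d6 hC1 hC2
            have hs1 : solM π t g a b = 0 := by
              rw [solM_rel hab hB1 ⟨hfa, hfb, hγ, hδ⟩, hg _ hB2, mul_zero]
            have hcond3 : π (π a) ≠ π a ∧ π (π b) ≠ π b ∧
                nb (π (π a)) (π a) (π b) ∧ nb (π (π a)) (π (π b)) (π b) := by
              refine ⟨hfa2, hfb2, ?_, ?_⟩
              · rw [hinv]; exact hβ
              · rw [hinv, hinv]; exact hα
            have hs2 : solM π t g (π a) (π b) = 0 := by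
              rw [solM_rel d5 hB2 hcond3, hinv, hinv, hg _ hB1, mul_zero]
            rw [hs1, hs2]
            split_ifs <;> simp
end Solution
section Injectivity
variable {N : ℕ} {r : ℕ} {π : Equiv.Perm (Fin N)} {t : Fin N → ℂ}

/-- A kernel element vanishing on `Bset` vanishes. -/
lemma ker_inj (hr : r = 0 ∨ r = 1) (hinv : ∀ i, π (π i) = i)
    (hfix : (Finset.univ.filter (fun i => π i = i)).card = r)
    (ht0 : ∀ i, t i ≠ 0)
    (htgen : ∀ i k : Fin N, k ≠ i → k ≠ π i → t i * t (π i) ≠ t k * t (π k))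
    (P : Matrix (Fin N) (Fin N) ℂ)
    (hker : ∀ i k : Fin N, (if cyc3 i (π k) k ∧ π k ≠ k then P i (π k) * t k else 0)
      + (if cyc3 i (π i) k ∧ π i ≠ i then t (π i) * P (π i) k else 0) = 0)
    (hdiag : ∀ i, P i i = 0)
    (hB : ∀ q ∈ Bset N π, P q.1 q.2 = 0) :
    P = 0 := by
  ext a b
  simp only [Matrix.zero_apply]
  by_cases hab : a = b
  · rw [hab]; exact hdiag b
  by_cases hmem : (a, b) ∈ Bset N π
  · exact hB _ hmem
  by_cases hfa : π a = a
  · -- first coordinate fixed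
    have hbb : b ≠ π b := fun h => hab (uniqfix π hr hfix hfa h.symm)
    have hik : a ≠ π b := by
      intro h
      have h2 : π a = b := (congrArg π h).trans (hinv b)
      exact hab ((h2.symm.trans hfa).symm)
    have hC : ¬ nb a (π b) b := by
      intro hnb
      exact hmem (mem_Bset.mpr ⟨hab, by rw [if_pos hfa]; exact hnb⟩)
    have hα : nb a b (π b) := (nb_xor hab hbb hik).mpr hC
    have heq := hker a (π b)
    rw [hinv] at heq
    rw [if_neg (c := cyc3 a (π a) (π b) ∧ π a ≠ a) (fun h => h.2 hfa), add_zero] at heq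
    rw [if_pos (c := cyc3 a b (π b) ∧ b ≠ π b)
      ⟨(cyc3_of_ne hik b).mpr hα, hbb⟩] at heq
    exact (mul_eq_zero.mp heq).resolve_right (ht0 (π b))
  by_cases hfb : π b = b
  · -- second coordinate fixed
    have hπab : π a ≠ b := fun h => hab (by rw [← hinv a, h, hfb])
    have hC : ¬ nb a (π a) b := fun hnb => hmem (mem_Bset_nonfix hab hfa hnb)
    have hxor := nb_xor (fun h : a = π a => hfa h.symm) hπab hab
    have h2 : nb a b (π a) := not_not.mp (fun hn => hC (hxor.mpr hn))
    have hγ : nb (π a) a b := nb_rot.mpr h2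
    have heq := hker (π a) b
    rw [hinv] at heq
    rw [if_neg (c := cyc3 (π a) (π b) b ∧ π b ≠ b) (fun h => h.2 hfb), zero_add] at heq
    rw [if_pos (c := cyc3 (π a) a b ∧ a ≠ π a)
      ⟨(cyc3_of_ne hπab a).mpr hγ, fun h => hfa h.symm⟩] at heq
    exact (mul_eq_zero.mp heq).resolve_left (ht0 a)
  · -- generic case
    have d1 : a ≠ π a := fun h => hfa h.symm
    have d2 : a ≠ b := hab
    have d3 : a ≠ π b := by
      intro h
      have hb : π a = b := (congrArg π h).trans (hinv b)
      exact hmem (mem_Bset_nonfix hab hfa (by rw [hb]; exact nb_right a b))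
    have d4 : π a ≠ b := fun h => d3 (by rw [← h, hinv])
    have d5 : π a ≠ π b := fun h => hab (π.injective h)
    have d6 : b ≠ π b := fun h => hfb h.symm
    have hfa2 : ¬ π (π a) = π a := by rw [hinv]; exact fun h => hfa h.symm
    have hC1 : ¬ nb a (π a) b := fun hnb => hmem (mem_Bset_nonfix hab hfa hnb)
    by_cases hC2 : nb (π a) a (π b)
    · rcases nbM4 d1 d2 d3 d4 d5 d6 hC1 hC2 with ⟨hα, hβ, hγ, hδ⟩ | ⟨hα, hβ, hγ, hδ⟩
      · -- relation case : use equation at (π a, b)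
        have hmem2 : (π a, π b) ∈ Bset N π :=
          mem_Bset_nonfix d5 hfa2 (by rw [hinv]; exact hC2)
        have heq := hker (π a) b
        rw [hinv] at heq
        rw [if_pos (c := cyc3 (π a) (π b) b ∧ π b ≠ b)
          ⟨(cyc3_of_ne d4 (π b)).mpr hδ, hfb⟩] at heq
        rw [if_pos (c := cyc3 (π a) a b ∧ a ≠ π a)
          ⟨(cyc3_of_ne d4 a).mpr hγ, d1⟩] at heq
        rw [hB _ hmem2, zero_mul, zero_add] at heq
        exact (mul_eq_zero.mp heq).resolve_left (ht0 a)
      · -- forced-zero case : use equation at (a, π b)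
        have heq := hker a (π b)
        rw [hinv] at heq
        rw [if_neg (c := cyc3 a (π a) (π b) ∧ π a ≠ a)
          (fun h => hβ ((cyc3_of_ne d3 (π a)).mp h.1)), add_zero] at heq
        rw [if_pos (c := cyc3 a b (π b) ∧ b ≠ π b)
          ⟨(cyc3_of_ne d3 b).mpr hα, d6⟩] at heq
        exact (mul_eq_zero.mp heq).resolve_right (ht0 (π b))
    · -- crossing case : both entries vanish by genericity
      obtain ⟨hα, hβ, hγ, hδ⟩ := nbM2 d1 d2 d3 d4 d5 d6 hC1 hC2
      have he1 := hker a (π b)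
      rw [hinv] at he1
      rw [if_pos (c := cyc3 a b (π b) ∧ b ≠ π b)
        ⟨(cyc3_of_ne d3 b).mpr hα, d6⟩] at he1
      rw [if_pos (c := cyc3 a (π a) (π b) ∧ π a ≠ a)
        ⟨(cyc3_of_ne d3 (π a)).mpr hβ, fun h => hfa h⟩] at he1
      have he2 := hker (π a) b
      rw [hinv] at he2
      rw [if_pos (c := cyc3 (π a) (π b) b ∧ π b ≠ b)
        ⟨(cyc3_of_ne d4 (π b)).mpr hδ, hfb⟩] at he2
      rw [if_pos (c := cyc3 (π a) a b ∧ a ≠ π a)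
        ⟨(cyc3_of_ne d4 a).mpr hγ, d1⟩] at he2
      have hgen : t a * t (π a) ≠ t b * t (π b) :=
        htgen a b (Ne.symm hab) (fun h : b = π a => d3 (show a = π b by rw [h, hinv]))
      have key : P (π a) (π b) * (t b * t (π b) - t a * t (π a)) = 0 := by
        linear_combination t (π b) * he2 - t a * he1
      have h0 : P (π a) (π b) = 0 := by
        rcases mul_eq_zero.mp key with h | h
        · exact h
        · exact absurd (sub_eq_zero.mp h) (Ne.symm hgen)
      rw [h0, zero_mul, zero_add] at he2
      exact (mul_eq_zero.mp he2).resolve_left (ht0 a)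
end Injectivity
/-- The Zariski tangent space computation: write `N = 2n + r`, `r ∈ {0,1}`; let `π` be a
link pattern, `t` generic diagonal entries (nonzero, with `t_i t_{π(i)} ≠ t_k t_{π(k)}`
whenever `k ∉ {i, π(i)}`), and `A = π̲ t` the matrix with `A_{ij} = t_j` iff `j = π(i)`,
`j ≠ i`.  Then the kernel of `P ↦ P • A + A • P` on the space of zero-diagonal matrices
has dimension `⌊N²/2⌋`. -/
theorem brauer_tangent_space_dimension (n r N : ℕ) (hr : r = 0 ∨ r = 1)
    (hN : N = 2 * n + r) (hpos : 0 < N)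
    (π : Equiv.Perm (Fin N)) (hinv : ∀ i, π (π i) = i)
    (hfix : (Finset.univ.filter (fun i => π i = i)).card = r)
    (t : Fin N → ℂ) (ht0 : ∀ i, t i ≠ 0)
    (htgen : ∀ i k : Fin N, k ≠ i → k ≠ π i → t i * t (π i) ≠ t k * t (π k))
    (A : Matrix (Fin N) (Fin N) ℂ)
    (hA : ∀ i j, A i j = if j = π i ∧ j ≠ i then t j else 0) :
    Module.finrank ℂ
      ↥(LinearMap.ker (brauerTangentMap N A) ⊓ diagZeroSubmodule N) = N ^ 2 / 2 := by
  classical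
  have hdiagmem : ∀ P : Matrix (Fin N) (Fin N) ℂ,
      P ∈ diagZeroSubmodule N ↔ ∀ i, P i i = 0 := fun P => Iff.rfl
  have hmemK : ∀ P : Matrix (Fin N) (Fin N) ℂ,
      P ∈ LinearMap.ker (brauerTangentMap N A) ⊓ diagZeroSubmodule N ↔
      ((∀ i k : Fin N, (if cyc3 i (π k) k ∧ π k ≠ k then P i (π k) * t k else 0)
        + (if cyc3 i (π i) k ∧ π i ≠ i then t (π i) * P (π i) k else 0) = 0) ∧
        ∀ i, P i i = 0) := by
    intro P
    rw [Submodule.mem_inf, LinearMap.mem_ker, mem_ker_iff π t A hinv hA, hdiagmem]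
  set K := LinearMap.ker (brauerTangentMap N A) ⊓ diagZeroSubmodule N with hK
  let R : K →ₗ[ℂ] (↥(Bset N π) → ℂ) :=
    { toFun := fun P q => (P : Matrix (Fin N) (Fin N) ℂ) q.1.1 q.1.2
      map_add' := by
        intro P Q
        funext q
        simp [Matrix.add_apply]
      map_smul' := by
        intro c P
        funext q
        simp [Matrix.smul_apply] }
  have hinj : Function.Injective R := by
    rw [injective_iff_map_eq_zero]
    intro P hP
    apply Subtype.ext
    obtain ⟨hker, hdiag⟩ := (hmemK P.1).mp P.2
    exact ker_inj hr hinv hfix ht0 htgen P.1 hker hdiag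
      (fun q hq => congrFun hP ⟨q, hq⟩)
  have hsurj : Function.Surjective R := by
    intro g'
    set g : Fin N × Fin N → ℂ := fun q => if h : q ∈ Bset N π then g' ⟨q, h⟩ else 0 with hgdef
    have hg : ∀ q, q ∉ Bset N π → g q = 0 := fun q h => dif_neg h
    have hsolK : solM π t g ∈ K := (hmemK _).mpr
      ⟨solM_ker hr hinv hfix ht0 hg, fun i => solM_diag i⟩
    refine ⟨⟨solM π t g, hsolK⟩, ?_⟩
    funext q
    show solM π t g q.1.1 q.1.2 = g' q
    have h1 : solM π t g q.1.1 q.1.2 = g q.1 := solM_of_mem q.2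
    rw [h1, hgdef]
    exact dif_pos q.2
  have e : K ≃ₗ[ℂ] (↥(Bset N π) → ℂ) := LinearEquiv.ofBijective R ⟨hinj, hsurj⟩
  rw [e.finrank_eq, Module.finrank_fintype_fun_eq_card, Fintype.card_coe]
  exact card_Bset π hr hN hpos hinv hfix
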